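/- Let M be a real symmetric n×n matrix with a simple eigenvalue λ_r whose eigengap satisfies γ_r = min_{k≠r} |λ_r − λ_k(M)| > 0, and let u_r be a unit eigenvector for λ_r. Let E be symmetric with ‖E‖_op < γ_r/2, and let λ̃_r denote the r-th eigenvalue of M + E (ordered correspondingly). Then |λ̃_r − λ_r − u_rᵀ E u_r| ≤ 2‖E‖_op²/γ_r. -/

import Mathlib

open Matrix

set_option maxHeartbeats 1600000000
set_option synthInstance.maxHeartbeats 1000000

section Helpers

variable {m : ℕ} {F : Type*} [NormedAddCommGroup F] [InnerProductSpace ℝ F]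

theorem aux_coordsum (b : OrthonormalBasis (Fin m) ℝ F) (x y : F) :
    (inner ℝ x y : ℝ) = ∑ k, (inner ℝ (b k) x : ℝ) * (inner ℝ (b k) y : ℝ) := by
  rw [← b.repr.inner_map_map x y]
  simp only [PiLp.inner_apply, RCLike.inner_apply, starRingEnd_apply, star_trivial,
    b.repr_apply_apply]
  exact Finset.sum_congr rfl fun k _ => mul_comm _ _

theorem aux_normsum (b : OrthonormalBasis (Fin m) ℝ F) (x : F) :
    ‖x‖ ^ 2 = ∑ k, (inner ℝ (b k) x : ℝ) ^ 2 := by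
  rw [← real_inner_self_eq_norm_sq, aux_coordsum b x x]; simp [sq]

theorem aux_diag_coord (b : OrthonormalBasis (Fin m) ℝ F) (T : F →ₗ[ℝ] F) (ν : Fin m → ℝ)
    (hsym : ∀ x y : F, (inner ℝ (T x) y : ℝ) = inner ℝ x (T y))
    (hb : ∀ k, T (b k) = ν k • b k) (x : F) (k : Fin m) :
    (inner ℝ (b k) (T x) : ℝ) = ν k * inner ℝ (b k) x := by
  rw [← hsym, hb, inner_smul_left]; simp

theorem aux_residual_coord (b : OrthonormalBasis (Fin m) ℝ F) (T : F →ₗ[ℝ] F) (ν : Fin m → ℝ)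
    (hsym : ∀ x y : F, (inner ℝ (T x) y : ℝ) = inner ℝ x (T y))
    (hb : ∀ k, T (b k) = ν k • b k) (μ : ℝ) (x : F) (k : Fin m) :
    (inner ℝ (b k) (T x - μ • x) : ℝ) = (ν k - μ) * inner ℝ (b k) x := by
  rw [inner_sub_right, aux_diag_coord b T ν hsym hb, inner_smul_right]
  ring

theorem aux_residual_sq (b : OrthonormalBasis (Fin m) ℝ F) (T : F →ₗ[ℝ] F) (ν : Fin m → ℝ)
    (hsym : ∀ x y : F, (inner ℝ (T x) y : ℝ) = inner ℝ x (T y))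
    (hb : ∀ k, T (b k) = ν k • b k) (μ : ℝ) (x : F) :
    ‖T x - μ • x‖ ^ 2 = ∑ k, (ν k - μ) ^ 2 * (inner ℝ (b k) x : ℝ) ^ 2 := by
  rw [aux_normsum b]
  refine Finset.sum_congr rfl fun k _ => ?_
  rw [aux_residual_coord b T ν hsym hb]; ring

theorem aux_residual_lower (b : OrthonormalBasis (Fin m) ℝ F) (T : F →ₗ[ℝ] F) (ν : Fin m → ℝ)
    (hsym : ∀ x y : F, (inner ℝ (T x) y : ℝ) = inner ℝ x (T y))
    (hb : ∀ k, T (b k) = ν k • b k) (μ d : ℝ) (hd : 0 ≤ d) (x : F)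
    (h : ∀ k, (inner ℝ (b k) x : ℝ) ≠ 0 → d ≤ |ν k - μ|) :
    d * ‖x‖ ≤ ‖T x - μ • x‖ := by
  have h2 : (d * ‖x‖) ^ 2 ≤ ‖T x - μ • x‖ ^ 2 := by
    rw [aux_residual_sq b T ν hsym hb, mul_pow, aux_normsum b, Finset.mul_sum]
    refine Finset.sum_le_sum fun k _ => ?_
    rcases eq_or_ne ((inner ℝ (b k) x : ℝ)) 0 with h0 | h0
    · simp [h0]
    · have h1 := h k h0
      have : d ^ 2 ≤ (ν k - μ) ^ 2 := by
        rw [← sq_abs (ν k - μ)]; exact pow_le_pow_left₀ hd h1 2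
      exact mul_le_mul_of_nonneg_right this (sq_nonneg _)
  exact le_of_pow_le_pow_left₀ two_ne_zero (norm_nonneg _) h2

theorem aux_residual_exists (b : OrthonormalBasis (Fin m) ℝ F) (T : F →ₗ[ℝ] F) (ν : Fin m → ℝ)
    (hsym : ∀ x y : F, (inner ℝ (T x) y : ℝ) = inner ℝ x (T y))
    (hb : ∀ k, T (b k) = ν k • b k) [NeZero m] (μ : ℝ) (x : F) :
    ∃ k, |ν k - μ| * ‖x‖ ≤ ‖T x - μ • x‖ := by
  obtain ⟨k0, -, hk0⟩ := Finset.exists_min_image Finset.univ (fun k => |ν k - μ|)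
    ⟨⟨0, Nat.pos_of_ne_zero (NeZero.ne m)⟩, Finset.mem_univ _⟩
  refine ⟨k0, ?_⟩
  have h2 : (|ν k0 - μ| * ‖x‖) ^ 2 ≤ ‖T x - μ • x‖ ^ 2 := by
    rw [aux_residual_sq b T ν hsym hb, mul_pow, aux_normsum b, Finset.mul_sum]
    refine Finset.sum_le_sum fun k _ => ?_
    have hle : |ν k0 - μ| ≤ |ν k - μ| := hk0 k (Finset.mem_univ _)
    have : |ν k0 - μ| ^ 2 ≤ (ν k - μ) ^ 2 := by
      rw [← sq_abs (ν k - μ)]; exact pow_le_pow_left₀ (abs_nonneg _) hle 2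
    exact mul_le_mul_of_nonneg_right this (sq_nonneg _)
  exact le_of_pow_le_pow_left₀ two_ne_zero (norm_nonneg _) h2

theorem aux_combo_sq {x₁ x₂ : F} (h12 : (inner ℝ x₁ x₂ : ℝ) = 0) (h1 : ‖x₁‖ = 1)
    (h2 : ‖x₂‖ = 1) (a b : ℝ) : ‖a • x₁ + b • x₂‖ ^ 2 = a ^ 2 + b ^ 2 := by
  rw [norm_add_sq_real]
  simp [norm_smul, real_inner_smul_left, real_inner_smul_right, h12, abs_mul,
    mul_pow, sq_abs, h1, h2]

end Helpers

/-- The ℓ²→ℓ² operator (spectral) norm of a real square matrix. -/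
noncomputable def matOpNorm {n : ℕ} (A : Matrix (Fin n) (Fin n) ℝ) : ℝ :=
  ‖LinearMap.toContinuousLinearMap (Matrix.toEuclideanLin A)‖

theorem stmt_4 {n : ℕ} (M E : Matrix (Fin n) (Fin n) ℝ)
    (hM : M.IsHermitian) (hE : E.IsHermitian)
    (r : Fin n) (lamr : ℝ) (hlamr : lamr = hM.eigenvalues r)
    (γ : ℝ) (hγ : 0 < γ)
    (hgap : ∀ k, k ≠ r → γ ≤ |lamr - hM.eigenvalues k|)
    (hγmin : ∃ k, k ≠ r ∧ γ = |lamr - hM.eigenvalues k|)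
    (u : Fin n → ℝ) (hu : ∑ i, u i ^ 2 = 1) (heig : M.mulVec u = lamr • u)
    (hEsmall : matOpNorm E < γ / 2)
    (hME : (M + E).IsHermitian) :
    ∃ j : Fin n, |hME.eigenvalues j - lamr - u ⬝ᵥ E.mulVec u|
        ≤ 2 * matOpNorm E ^ 2 / γ ∧
      ∀ j' : Fin n, |hME.eigenvalues j' - lamr| < γ / 2 →
        hME.eigenvalues j' = hME.eigenvalues j := by
  classical
  have hn : 0 < n := r.pos
  haveI : NeZero n := ⟨hn.ne'⟩
  set t := matOpNorm E with htdef
  have ht0 : 0 ≤ t := norm_nonneg _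
  have htγ : t < γ / 2 := hEsmall
  set TM := Matrix.toEuclideanLin M with hTM
  set TE := Matrix.toEuclideanLin E with hTEdef
  set TA := Matrix.toEuclideanLin (M + E) with hTA
  have hTAsum : ∀ x, TA x = TM x + TE x := by
    intro x; rw [hTA, hTM, hTEdef, map_add]; rfl
  set uE : EuclideanSpace ℝ (Fin n) := (WithLp.equiv 2 (Fin n → ℝ)).symm u with huE
  -- basic norm facts
  have hTEbound : ∀ x : EuclideanSpace ℝ (Fin n), ‖TE x‖ ≤ t * ‖x‖ := by
    intro x
    have := (LinearMap.toContinuousLinearMap (Matrix.toEuclideanLin E)).le_opNorm x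
    simpa [htdef, matOpNorm, hTEdef] using this
  have hMsym : ∀ x y : EuclideanSpace ℝ (Fin n),
      (inner ℝ (TM x) y : ℝ) = inner ℝ x (TM y) := Matrix.isHermitian_iff_isSymmetric.mp hM
  have hAsym : ∀ x y : EuclideanSpace ℝ (Fin n),
      (inner ℝ (TA x) y : ℝ) = inner ℝ x (TA y) := Matrix.isHermitian_iff_isSymmetric.mp hME
  have hu1 : ‖uE‖ = 1 := by
    have hsq : ‖uE‖ ^ 2 = 1 := by
      rw [huE, EuclideanSpace.norm_eq, Real.sq_sqrt (by positivity)]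
      simpa [sq_abs] using hu
    nlinarith [norm_nonneg uE]
  have hTMu : TM uE = lamr • uE := by
    apply (WithLp.equiv 2 (Fin n → ℝ)).injective
    simpa [hTM, Matrix.toEuclideanLin_apply, huE] using heig
  -- eigen data of M
  set wM := hM.eigenvectorBasis with hwM
  set lam := hM.eigenvalues with hlam
  have hbM : ∀ k, TM (wM k) = lam k • wM k := by
    intro k
    apply (WithLp.equiv 2 (Fin n → ℝ)).injective
    simpa [hTM, Matrix.toEuclideanLin_apply] using hM.mulVec_eigenvectorBasis k
  -- eigen data of A = M + E
  set xB := hME.eigenvectorBasis with hxB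
  set ν := hME.eigenvalues with hν
  have hbA : ∀ k, TA (xB k) = ν k • xB k := by
    intro k
    apply (WithLp.equiv 2 (Fin n → ℝ)).injective
    simpa [hTA, Matrix.toEuclideanLin_apply, Matrix.add_mulVec]
      using hME.mulVec_eigenvectorBasis k
  -- coordinates of u in M-eigenbasis vanish off r
  have hucoord : ∀ k, k ≠ r → (inner ℝ (wM k) uE : ℝ) = 0 := by
    intro k hk
    have h1 : (inner ℝ (wM k) (TM uE) : ℝ) = lam k * inner ℝ (wM k) uE :=
      aux_diag_coord wM TM lam hMsym hbM uE k
    have h2 : (inner ℝ (wM k) (TM uE) : ℝ) = lamr * inner ℝ (wM k) uE := by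
      rw [hTMu, inner_smul_right]
    have hne : lam k ≠ lamr := by
      intro hcon
      have := hgap k hk
      rw [hcon] at this
      simp at this; linarith
    have : (lam k - lamr) * (inner ℝ (wM k) uE : ℝ) = 0 := by linarith [h1, h2]
    rcases mul_eq_zero.mp this with h | h
    · exact absurd (by linarith : lam k = lamr) hne
    · exact h
  have hur2 : (inner ℝ (wM r) uE : ℝ) ^ 2 = 1 := by
    have := aux_normsum wM uE
    rw [hu1] at this
    rw [Finset.sum_eq_single r (fun k _ hk => by rw [hucoord k hk]; ring)
      (fun h => absurd (Finset.mem_univ r) h)] at this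
    linarith
  have hurne : (inner ℝ (wM r) uE : ℝ) ≠ 0 := by
    intro h; rw [h] at hur2; norm_num at hur2
  -- gap lower bound for M on the orthogonal complement of u
  have hMgap : ∀ v : EuclideanSpace ℝ (Fin n), (inner ℝ uE v : ℝ) = 0 →
      γ * ‖v‖ ≤ ‖TM v - lamr • v‖ := by
    intro v hv
    refine aux_residual_lower wM TM lam hMsym hbM lamr γ hγ.le v fun k hk => ?_
    have hkr : k ≠ r := by
      intro hcon; subst hcon
      -- then inner ℝ (wM k) v = 0 from hv
      have := aux_coordsum wM uE v
      rw [hv, Finset.sum_eq_single k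
        (fun j _ hj => by rw [hucoord j hj]; ring)
        (fun h => absurd (Finset.mem_univ k) h)] at this
      have : (inner ℝ (wM k) v : ℝ) = 0 := by
        rcases mul_eq_zero.mp this.symm with h | h
        · exact absurd h hurne
        · exact h
      exact hk this
    have := hgap k hkr
    rwa [abs_sub_comm] at this
  -- uniqueness of eigenvalues of A near lamr
  have huniq : ∀ j₁ j₂ : Fin n, |ν j₁ - lamr| < γ - t → |ν j₂ - lamr| < γ - t →
      ν j₁ = ν j₂ := by
    intro j₁ j₂ hj₁ hj₂
    by_contra hne
    have hjne : j₁ ≠ j₂ := fun h => hne (by rw [h])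
    have h12 : (inner ℝ (xB j₁) (xB j₂) : ℝ) = 0 := xB.orthonormal.2 hjne
    have hn1 : ‖xB j₁‖ = 1 := xB.orthonormal.1 j₁
    have hn2 : ‖xB j₂‖ = 1 := xB.orthonormal.1 j₂
    have key : ∀ a b : ℝ,
        a * (inner ℝ uE (xB j₁) : ℝ) + b * (inner ℝ uE (xB j₂) : ℝ) = 0 →
        0 < a ^ 2 + b ^ 2 → False := by
      intro a b hperp hpos
      set v := a • xB j₁ + b • xB j₂ with hvdef
      have hvperp : (inner ℝ uE v : ℝ) = 0 := by
        rw [hvdef, inner_add_right, inner_smul_right, inner_smul_right]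
        simpa using hperp
      have hvnorm : ‖v‖ ^ 2 = a ^ 2 + b ^ 2 := aux_combo_sq h12 hn1 hn2 a b
      have hvpos : 0 < ‖v‖ := by
        rcases (norm_nonneg v).lt_or_eq with h | h
        · exact h
        · exfalso; rw [← h] at hvnorm; simp at hvnorm; nlinarith
      have hAv : TA v - lamr • v
          = (a * (ν j₁ - lamr)) • xB j₁ + (b * (ν j₂ - lamr)) • xB j₂ := by
        have h1 : TA v = a • (ν j₁ • xB j₁) + b • (ν j₂ • xB j₂) := by
          rw [hvdef, map_add, LinearMap.map_smul, LinearMap.map_smul, hbA, hbA]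
        rw [h1, hvdef, smul_add, smul_smul, smul_smul, smul_smul, smul_smul]
        rw [show (a * (ν j₁ - lamr)) = a * ν j₁ - lamr * a by ring,
          show (b * (ν j₂ - lamr)) = b * ν j₂ - lamr * b by ring,
          sub_smul, sub_smul]
        abel
      have hAvsq : ‖TA v - lamr • v‖ ^ 2
          = (a * (ν j₁ - lamr)) ^ 2 + (b * (ν j₂ - lamr)) ^ 2 := by
        rw [hAv]; exact aux_combo_sq h12 hn1 hn2 _ _
      have hγt : 0 < γ - t := by linarith
      have hAvlt : ‖TA v - lamr • v‖ < (γ - t) * ‖v‖ := by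
        have hsq : ‖TA v - lamr • v‖ ^ 2 < ((γ - t) * ‖v‖) ^ 2 := by
          have expand : ((γ - t) * ‖v‖) ^ 2 = (γ - t) ^ 2 * a ^ 2 + (γ - t) ^ 2 * b ^ 2 := by
            rw [mul_pow, hvnorm]; ring
          rw [hAvsq, expand]
          have e1' : (ν j₁ - lamr) ^ 2 < (γ - t) ^ 2 := by
            rw [← sq_abs (ν j₁ - lamr)]
            have := abs_nonneg (ν j₁ - lamr)
            nlinarith
          have e2' : (ν j₂ - lamr) ^ 2 < (γ - t) ^ 2 := by
            rw [← sq_abs (ν j₂ - lamr)]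
            have := abs_nonneg (ν j₂ - lamr)
            nlinarith
          have k1 : 0 ≤ a ^ 2 * ((γ - t) ^ 2 - (ν j₁ - lamr) ^ 2) :=
            mul_nonneg (sq_nonneg a) (by nlinarith)
          have k2 : 0 ≤ b ^ 2 * ((γ - t) ^ 2 - (ν j₂ - lamr) ^ 2) :=
            mul_nonneg (sq_nonneg b) (by nlinarith)
          rcases (sq_nonneg a).eq_or_lt with ha | ha
          · have hb : 0 < b ^ 2 := by nlinarith
            have k3 : 0 < b ^ 2 * ((γ - t) ^ 2 - (ν j₂ - lamr) ^ 2) :=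
              mul_pos hb (by nlinarith)
            nlinarith
          · have k3 : 0 < a ^ 2 * ((γ - t) ^ 2 - (ν j₁ - lamr) ^ 2) :=
              mul_pos ha (by nlinarith)
            nlinarith
        have h1 : 0 ≤ (γ - t) * ‖v‖ := by positivity
        exact lt_of_pow_lt_pow_left₀ 2 h1 hsq
      have hTMv : γ * ‖v‖ ≤ ‖TM v - lamr • v‖ := hMgap v hvperp
      have htri : ‖TM v - lamr • v‖ ≤ ‖TA v - lamr • v‖ + ‖TE v‖ := by
        have : TM v - lamr • v = (TA v - lamr • v) - TE v := by
          rw [hTAsum]; abel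
        rw [this]; exact norm_sub_le _ _
      have hTEv : ‖TE v‖ ≤ t * ‖v‖ := hTEbound v
      nlinarith
    by_cases ha : (inner ℝ uE (xB j₁) : ℝ) = 0
    · exact key 1 0 (by rw [ha]; ring) (by norm_num)
    · refine key (inner ℝ uE (xB j₂) : ℝ) (-(inner ℝ uE (xB j₁) : ℝ)) (by ring) ?_
      have : 0 < (inner ℝ uE (xB j₁) : ℝ) ^ 2 :=
        (sq_nonneg _).lt_of_ne (Ne.symm (pow_ne_zero 2 ha))
      nlinarith [sq_nonneg (inner ℝ uE (xB j₂) : ℝ)]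
  -- existence of an eigenvalue of A close to lamr
  obtain ⟨j₀, hj₀⟩ := aux_residual_exists xB TA ν hAsym hbA lamr uE
  have hj₀t : |ν j₀ - lamr| ≤ t := by
    have hres : TA uE - lamr • uE = TE uE := by
      rw [hTAsum, hTMu]; abel
    rw [hu1, mul_one, hres] at hj₀
    calc |ν j₀ - lamr| ≤ ‖TE uE‖ := hj₀
      _ ≤ t * ‖uE‖ := hTEbound uE
      _ = t := by rw [hu1, mul_one]
  -- main second-order bound
  set e₀ : ℝ := inner ℝ uE (TE uE) with he₀
  have hgoal_e₀ : u ⬝ᵥ E.mulVec u = e₀ := by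
    rw [he₀, hTEdef]
    simp [PiLp.inner_apply, Matrix.toEuclideanLin_apply, dotProduct,
      RCLike.inner_apply, huE]
    exact Finset.sum_congr rfl fun i _ => mul_comm _ _
  have hEu_norm : ‖TE uE‖ ≤ t := by
    calc ‖TE uE‖ ≤ t * ‖uE‖ := hTEbound uE
      _ = t := by rw [hu1, mul_one]
  have he₀abs : |e₀| ≤ t := by
    rw [he₀]
    calc |(inner ℝ uE (TE uE) : ℝ)| ≤ ‖uE‖ * ‖TE uE‖ := abs_real_inner_le_norm _ _
      _ = ‖TE uE‖ := by rw [hu1, one_mul]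
      _ ≤ t := hEu_norm
  -- the subspace V = u⊥ and the compression B of A to V
  set V : Submodule ℝ (EuclideanSpace ℝ (Fin n)) := (ℝ ∙ uE)ᗮ with hVdef
  have hmemV : ∀ x : EuclideanSpace ℝ (Fin n), x ∈ V ↔ (inner ℝ uE x : ℝ) = 0 := by
    intro x; rw [hVdef]; exact Submodule.mem_orthogonal_singleton_iff_inner_right
  have huEne : uE ≠ 0 := by
    intro h; rw [h] at hu1; simp at hu1
  have hfinV : Module.finrank ℝ V = n - 1 := by
    have h1 : Module.finrank ℝ (ℝ ∙ uE) = 1 := finrank_span_singleton huEne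
    have h2 := Submodule.finrank_add_finrank_orthogonal (K := (ℝ ∙ uE))
    rw [h1, finrank_euclideanSpace, Fintype.card_fin, ← hVdef] at h2
    omega
  set P := V.orthogonalProjectionOnto with hPdef
  have hinnerP : ∀ (x : EuclideanSpace ℝ (Fin n)) (w : V),
      (inner ℝ ((P x : V) : EuclideanSpace ℝ (Fin n)) (w : EuclideanSpace ℝ (Fin n)) : ℝ)
        = inner ℝ x (w : EuclideanSpace ℝ (Fin n)) := by
    intro x w
    have h := Submodule.starProjection_inner_eq_zero (K := V) x (w : EuclideanSpace ℝ (Fin n)) w.2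
    rw [Submodule.starProjection_apply] at h
    rw [inner_sub_left] at h
    rw [hPdef] at *
    linarith [h]
  have hPle : ∀ x : EuclideanSpace ℝ (Fin n), ‖(P x : V)‖ ≤ ‖x‖ := by
    intro x
    calc ‖(P x : V)‖ ≤ ‖P‖ * ‖x‖ := P.le_opNorm x
      _ ≤ 1 * ‖x‖ := by
          have := Submodule.orthogonalProjectionOnto_norm_le (K := V)
          rw [hPdef]
          exact mul_le_mul_of_nonneg_right this (norm_nonneg x)
      _ = ‖x‖ := one_mul _
  set BOP : V →ₗ[ℝ] V := (P : EuclideanSpace ℝ (Fin n) →L[ℝ] V).toLinearMap.comp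
    (TA.comp V.subtype) with hBdef
  have hBapply : ∀ z : V, BOP z = P (TA (z : EuclideanSpace ℝ (Fin n))) := fun z => rfl
  have hBsym : BOP.IsSymmetric := by
    intro z w
    rw [Submodule.coe_inner, Submodule.coe_inner, hBapply, hBapply, hinnerP, hAsym]
    calc (inner ℝ ((z : EuclideanSpace ℝ (Fin n))) (TA (w : EuclideanSpace ℝ (Fin n))) : ℝ)
        = inner ℝ (TA (w : EuclideanSpace ℝ (Fin n))) ((z : EuclideanSpace ℝ (Fin n))) :=
          real_inner_comm _ _
      _ = inner ℝ (((P (TA (w : EuclideanSpace ℝ (Fin n)))) : V) : EuclideanSpace ℝ (Fin n))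
            ((z : EuclideanSpace ℝ (Fin n))) := (hinnerP _ _).symm
      _ = inner ℝ ((z : EuclideanSpace ℝ (Fin n)))
            (((P (TA (w : EuclideanSpace ℝ (Fin n)))) : V) : EuclideanSpace ℝ (Fin n)) :=
          real_inner_comm _ _
  set yB := hBsym.eigenvectorBasis hfinV with hyBdef
  set β := hBsym.eigenvalues hfinV with hβdef
  have hbB : ∀ k, BOP (yB k) = β k • yB k := by
    intro k
    have := hBsym.apply_eigenvectorBasis hfinV k
    rw [hyBdef, hβdef]
    simpa using this
  have hBsym' : ∀ z w : V, (inner ℝ (BOP z) w : ℝ) = inner ℝ z (BOP w) := hBsym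
  -- the eigenvalues of the compression stay γ - t away from lamr
  have hβgap : ∀ k, γ - t ≤ |β k - lamr| := by
    intro k
    set y : V := yB k with hydef
    have hy1V : ‖y‖ = 1 := yB.orthonormal.1 k
    have hy1 : ‖(y : EuclideanSpace ℝ (Fin n))‖ = 1 := hy1V
    have hyperp : (inner ℝ uE (y : EuclideanSpace ℝ (Fin n)) : ℝ) = 0 := (hmemV _).1 y.2
    have hgapM : γ ≤ ‖TM (y : EuclideanSpace ℝ (Fin n)) - lamr • (y : EuclideanSpace ℝ (Fin n))‖ := by
      have := hMgap (y : EuclideanSpace ℝ (Fin n)) hyperp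
      rwa [hy1, mul_one] at this
    have hSmem : TM (y : EuclideanSpace ℝ (Fin n)) - lamr • (y : EuclideanSpace ℝ (Fin n)) ∈ V := by
      rw [hmemV, inner_sub_right, inner_smul_right, ← hMsym, hTMu, real_inner_smul_left,
        hyperp]
      ring
    have hPS : ((P (TM (y : EuclideanSpace ℝ (Fin n)) - lamr • (y : EuclideanSpace ℝ (Fin n))) : V) : EuclideanSpace ℝ (Fin n))
        = TM (y : EuclideanSpace ℝ (Fin n)) - lamr • (y : EuclideanSpace ℝ (Fin n)) :=
      by rw [← Submodule.starProjection_apply]; exact Submodule.starProjection_eq_self_iff.mpr hSmem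
    have hPdecomp : (P (TM (y : EuclideanSpace ℝ (Fin n)) - lamr • (y : EuclideanSpace ℝ (Fin n))) : V)
        = (β k - lamr) • y - P (TE (y : EuclideanSpace ℝ (Fin n))) := by
      have hTM' : TM (y : EuclideanSpace ℝ (Fin n)) - lamr • (y : EuclideanSpace ℝ (Fin n))
          = (TA (y : EuclideanSpace ℝ (Fin n)) - TE (y : EuclideanSpace ℝ (Fin n)))
            - lamr • (y : EuclideanSpace ℝ (Fin n)) := by
        rw [hTAsum]; abel
      rw [hTM', map_sub, map_sub, _root_.map_smul]
      have h1 : (P (TA (y : EuclideanSpace ℝ (Fin n))) : V) = β k • y := by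
        rw [← hBapply, hbB, hydef]
      have h2 : (P ((y : EuclideanSpace ℝ (Fin n))) : V) = y :=
        Submodule.orthogonalProjectionOnto_mem_subspace_eq_self y
      rw [h1, h2, sub_smul]
      abel
    have hnorm_le : ‖TM (y : EuclideanSpace ℝ (Fin n)) - lamr • (y : EuclideanSpace ℝ (Fin n))‖
        ≤ |β k - lamr| + t := by
      have e1 : ‖TM (y : EuclideanSpace ℝ (Fin n)) - lamr • (y : EuclideanSpace ℝ (Fin n))‖
          = ‖(β k - lamr) • y - P (TE (y : EuclideanSpace ℝ (Fin n)))‖ := by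
        rw [← hPS, hPdecomp]
        exact (Submodule.coe_norm _).symm
      rw [e1]
      calc ‖(β k - lamr) • y - P (TE (y : EuclideanSpace ℝ (Fin n)))‖
          ≤ ‖(β k - lamr) • y‖ + ‖(P (TE (y : EuclideanSpace ℝ (Fin n))) : V)‖ := norm_sub_le _ _
        _ ≤ |β k - lamr| + t := by
            have e2 : ‖(β k - lamr) • y‖ = |β k - lamr| := by
              rw [norm_smul, hy1V, mul_one]; simp
            have e3 : ‖(P (TE (y : EuclideanSpace ℝ (Fin n))) : V)‖ ≤ t := by
              calc ‖(P (TE (y : EuclideanSpace ℝ (Fin n))) : V)‖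
                  ≤ ‖TE (y : EuclideanSpace ℝ (Fin n))‖ := hPle _
                _ ≤ t * ‖(y : EuclideanSpace ℝ (Fin n))‖ := hTEbound _
                _ = t := by rw [hy1, mul_one]
            linarith
    linarith
  -- notation for the distinguished eigenvalue and eigenvector of A
  set lt := ν j₀ with hltdef
  set xt : EuclideanSpace ℝ (Fin n) := xB j₀ with hxtdef
  have hxt1 : ‖xt‖ = 1 := xB.orthonormal.1 j₀
  set p : ℝ := inner ℝ uE xt with hpdef
  set ztamb : EuclideanSpace ℝ (Fin n) := xt - p • uE with hztdef
  have huEuE : (inner ℝ uE uE : ℝ) = 1 := by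
    rw [real_inner_self_eq_norm_sq, hu1]; norm_num
  have hztmem : ztamb ∈ V := by
    rw [hmemV, hztdef, inner_sub_right, inner_smul_right, huEuE, hpdef]; ring
  set zt : V := ⟨ztamb, hztmem⟩ with hztV
  set bamb : EuclideanSpace ℝ (Fin n) := TE uE - e₀ • uE with hbambdef
  have hbmem : bamb ∈ V := by
    rw [hmemV, hbambdef, inner_sub_right, inner_smul_right, huEuE, he₀]; ring
  set bV : V := ⟨bamb, hbmem⟩ with hbVdef
  have hbVnorm : ‖bV‖ ^ 2 ≤ t ^ 2 - e₀ ^ 2 := by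
    have e1 : ‖bV‖ = ‖bamb‖ := rfl
    have e2 : ‖bamb‖ ^ 2 = ‖TE uE‖ ^ 2 - e₀ ^ 2 := by
      rw [hbambdef, norm_sub_sq_real]
      have h1 : (inner ℝ (TE uE) (e₀ • uE) : ℝ) = e₀ * e₀ := by
        rw [real_inner_smul_right, real_inner_comm, ← he₀]
      have h2 : ‖e₀ • uE‖ = |e₀| := by rw [norm_smul, hu1, mul_one]; rfl
      rw [h1, h2, sq_abs]
      ring
    rw [e1, e2]
    have := hEu_norm
    nlinarith [norm_nonneg (TE uE)]
  -- the projection of uE is zero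
  have hPuE : (P uE : V) = 0 := by
    have h1 : (inner ℝ ((P uE : V) : EuclideanSpace ℝ (Fin n))
        ((P uE : V) : EuclideanSpace ℝ (Fin n)) : ℝ) = 0 := by
      rw [hinnerP]
      exact (hmemV _).1 (P uE).2
    have h2 : ((P uE : V) : EuclideanSpace ℝ (Fin n)) = 0 := inner_self_eq_zero.mp h1
    exact Submodule.coe_eq_zero.mp h2
  -- key relation : BOP zt = lt • zt - p • bV
  have hBz : BOP zt = lt • zt - p • bV := by
    rw [hBapply]
    have hz' : (zt : EuclideanSpace ℝ (Fin n)) = xt - p • uE := rfl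
    rw [hz', map_sub, _root_.map_smul, map_sub, _root_.map_smul]
    have h1 : (P (TA xt) : V) = lt • P xt := by
      rw [hxtdef, hbA j₀, _root_.map_smul, hltdef]
    have h2 : (P xt : V) = zt := by
      have : xt = ztamb + p • uE := by rw [hztdef]; abel
      rw [this, map_add, _root_.map_smul, hPuE, smul_zero, add_zero]
      exact Submodule.orthogonalProjectionOnto_mem_subspace_eq_self zt
    have h3 : (P (TA uE) : V) = bV := by
      have hTAu : TA uE = lamr • uE + TE uE := by rw [hTAsum, hTMu]
      have hTEu : TE uE = bamb + e₀ • uE := by rw [hbambdef]; abel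
      rw [hTAu, map_add, _root_.map_smul, hPuE, smul_zero, zero_add, hTEu, map_add,
        _root_.map_smul, hPuE, smul_zero, add_zero]
      exact Submodule.orthogonalProjectionOnto_mem_subspace_eq_self bV
    rw [h1, h2, h3]
  -- coordinates in the eigenbasis of BOP
  set c : Fin (n - 1) → ℝ := fun k => inner ℝ (yB k) zt with hcdef
  set d : Fin (n - 1) → ℝ := fun k => inner ℝ (yB k) bV with hddef
  have hcoord : ∀ k, (β k - lt) * c k = -(p * d k) := by
    intro k
    have h1 : (inner ℝ (yB k) (BOP zt) : ℝ) = β k * c k :=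
      aux_diag_coord yB BOP β hBsym' hbB zt k
    have h2 : (inner ℝ (yB k) (BOP zt) : ℝ) = lt * c k - p * d k := by
      rw [hBz, inner_sub_right, inner_smul_right, inner_smul_right, hcdef, hddef]
    rw [h2] at h1
    linarith
  -- the overlap p is nonzero
  have hνt : |lt - lamr| ≤ t := hj₀t
  have hβlt : ∀ k, γ - 2 * t ≤ |β k - lt| := by
    intro k
    have h1 := hβgap k
    have h2 : |β k - lamr| ≤ |β k - lt| + |lt - lamr| := by
      have h3 := abs_add_le (β k - lt) (lt - lamr)
      have h4 : β k - lamr = (β k - lt) + (lt - lamr) := by ring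
      rw [h4]; exact h3
    linarith [hνt]
  have hγ2t : 0 < γ - 2 * t := by linarith
  have hp0 : p ≠ 0 := by
    intro hp
    have hzx : ztamb = xt := by rw [hztdef, hp, zero_smul, sub_zero]
    have hz1 : ‖zt‖ = 1 := by
      have : ‖zt‖ = ‖ztamb‖ := rfl
      rw [this, hzx, hxt1]
    have hcz : ∀ k, c k = 0 := by
      intro k
      have := hcoord k
      rw [hp, zero_mul, neg_zero, mul_eq_zero] at this
      rcases this with h | h
      · exfalso
        have := hβlt k
        rw [show β k - lt = 0 by linarith, abs_zero] at this
        linarith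
      · exact h
    have : ‖zt‖ ^ 2 = 0 := by
      rw [aux_normsum yB zt]
      apply Finset.sum_eq_zero
      intro k _
      rw [show (inner ℝ (yB k) zt : ℝ) = c k from rfl, hcz k]; ring
    rw [hz1] at this; norm_num at this
  have hp2 : 0 < p ^ 2 := (sq_nonneg p).lt_of_ne (Ne.symm (pow_ne_zero 2 hp0))
  -- the first-order identity
  set ρ : ℝ := lt - lamr - e₀ with hρdef
  have hpρ : p * ρ = inner ℝ zt bV := by
    have h1 : (inner ℝ uE (TA xt) : ℝ) = lt * p := by
      rw [hxtdef, hbA j₀, inner_smul_right, ← hpdef, ← hltdef]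
    have h2 : (inner ℝ uE (TA xt) : ℝ) = lamr * p + e₀ * p + (inner ℝ bamb ztamb : ℝ) := by
      rw [← hAsym, hTAsum, hTMu]
      rw [add_comm (lamr • uE), inner_add_left, inner_smul_left]
      have e1 : (inner ℝ (TE uE) xt : ℝ) = inner ℝ bamb ztamb + e₀ * p := by
        have hTEu : TE uE = bamb + e₀ • uE := by rw [hbambdef]; abel
        have hxtz : xt = ztamb + p • uE := by rw [hztdef]; abel
        rw [hTEu, hxtz, inner_add_left, inner_add_right, inner_add_right,
          inner_smul_left, inner_smul_right, inner_smul_left, inner_smul_right]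
        have hbu : (inner ℝ bamb uE : ℝ) = 0 := by
          have := hbmem
          rw [hmemV] at this
          rw [real_inner_comm]; exact this
        have huz : (inner ℝ uE ztamb : ℝ) = 0 := by
          have := hztmem
          rw [hmemV] at this; exact this
        rw [hbu, huz, huEuE]
        simp
      rw [e1, ← hpdef]
      simp; ring
    have : lt * p = lamr * p + e₀ * p + (inner ℝ bamb ztamb : ℝ) := by rw [← h1, h2]
    have hz : (inner ℝ zt bV : ℝ) = inner ℝ bamb ztamb := by
      rw [Submodule.coe_inner]
      exact real_inner_comm _ _
    rw [hz, hρdef]; linarith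
  have hsumcd : (inner ℝ zt bV : ℝ) = ∑ k, c k * d k := by
    rw [aux_coordsum yB zt bV]
  have hmain : p ^ 2 * ρ = ∑ k, (lt - β k) * c k ^ 2 := by
    have h1 : p ^ 2 * ρ = p * (p * ρ) := by ring
    rw [h1, hpρ, hsumcd, Finset.mul_sum]
    refine Finset.sum_congr rfl fun k _ => ?_
    linear_combination c k * hcoord k
  -- the two one-sided secular bounds
  have hltwin : |lt - lamr| < γ - t := by
    have : t < γ - t := by linarith
    linarith [hνt]
  have key_pos : 0 ≤ ρ → ρ * (γ - t + (lt - lamr)) ≤ t ^ 2 - e₀ ^ 2 := by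
    intro hρ0
    set D : ℝ := γ - t + (lt - lamr) with hDdef
    have hD : 0 < D := by
      rw [hDdef]
      cases' abs_le.mp hνt with h1 h2
      linarith
    set S := Finset.univ.filter (fun k => β k < lt) with hSdef
    have hsplit : p ^ 2 * ρ ≤ ∑ k ∈ S, (lt - β k) * c k ^ 2 := by
      rw [hmain]
      have := Finset.sum_filter_add_sum_filter_not Finset.univ (fun k => β k < lt)
        (fun k => (lt - β k) * c k ^ 2)
      rw [← this, ← hSdef]
      have : ∑ k ∈ Finset.univ.filter (fun k => ¬ β k < lt), (lt - β k) * c k ^ 2 ≤ 0 := by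
        apply Finset.sum_nonpos
        intro k hk
        rw [Finset.mem_filter] at hk
        have : lt - β k ≤ 0 := by push_neg at hk; linarith [hk.2]
        exact mul_nonpos_of_nonpos_of_nonneg this (sq_nonneg _)
      linarith
    have hterm : ∀ k ∈ S, D * ((lt - β k) * c k ^ 2) ≤ p ^ 2 * d k ^ 2 := by
      intro k hk
      rw [hSdef, Finset.mem_filter] at hk
      have hβk : β k ≤ lamr - (γ - t) := by
        rcases le_or_gt (γ - t) (β k - lamr) with h | h
        · exfalso
          have : lt < lamr + (γ - t) := by
            cases' abs_le.mp hνt with h1 h2; linarith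
          linarith [hk.2]
        · have := hβgap k
          rcases abs_cases (β k - lamr) with ⟨he, _⟩ | ⟨he, _⟩
          · linarith [this, he]
          · linarith [this, he]
      have hDle : D ≤ lt - β k := by rw [hDdef]; linarith
      have h1 : D * ((lt - β k) * c k ^ 2) ≤ (lt - β k) * ((lt - β k) * c k ^ 2) :=
        mul_le_mul_of_nonneg_right hDle
          (mul_nonneg (by linarith) (sq_nonneg _))
      have h2 : (lt - β k) * ((lt - β k) * c k ^ 2) = ((β k - lt) * c k) ^ 2 := by ring
      have h3 : ((β k - lt) * c k) ^ 2 = p ^ 2 * d k ^ 2 := by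
        rw [hcoord k]; ring
      calc D * ((lt - β k) * c k ^ 2) ≤ (lt - β k) * ((lt - β k) * c k ^ 2) := h1
        _ = p ^ 2 * d k ^ 2 := by rw [h2, h3]
    have hsum2 : D * (p ^ 2 * ρ) ≤ p ^ 2 * (t ^ 2 - e₀ ^ 2) := by
      calc D * (p ^ 2 * ρ) ≤ D * ∑ k ∈ S, (lt - β k) * c k ^ 2 :=
            mul_le_mul_of_nonneg_left hsplit hD.le
        _ = ∑ k ∈ S, D * ((lt - β k) * c k ^ 2) := by rw [Finset.mul_sum]
        _ ≤ ∑ k ∈ S, p ^ 2 * d k ^ 2 := Finset.sum_le_sum hterm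
        _ ≤ ∑ k, p ^ 2 * d k ^ 2 := by
            apply Finset.sum_le_sum_of_subset_of_nonneg (Finset.filter_subset _ _)
            intro k _ _; positivity
        _ = p ^ 2 * ∑ k, d k ^ 2 := by rw [Finset.mul_sum]
        _ = p ^ 2 * ‖bV‖ ^ 2 := by
            rw [aux_normsum yB bV]
        _ ≤ p ^ 2 * (t ^ 2 - e₀ ^ 2) := mul_le_mul_of_nonneg_left hbVnorm (sq_nonneg _)
    have h5 : p ^ 2 * (D * ρ) ≤ p ^ 2 * (t ^ 2 - e₀ ^ 2) := by
      calc p ^ 2 * (D * ρ) = D * (p ^ 2 * ρ) := by ring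
        _ ≤ p ^ 2 * (t ^ 2 - e₀ ^ 2) := hsum2
    have h6 := le_of_mul_le_mul_left h5 hp2
    linarith [h6]
  have key_neg : ρ < 0 → (-ρ) * (γ - t - (lt - lamr)) ≤ t ^ 2 - e₀ ^ 2 := by
    intro hρ0
    set D : ℝ := γ - t - (lt - lamr) with hDdef
    have hD : 0 < D := by
      rw [hDdef]
      cases' abs_le.mp hνt with h1 h2
      linarith
    set S := Finset.univ.filter (fun k => lt < β k) with hSdef
    have hmain' : p ^ 2 * (-ρ) = ∑ k, (β k - lt) * c k ^ 2 := by
      rw [show p ^ 2 * (-ρ) = -(p ^ 2 * ρ) by ring, hmain, ← Finset.sum_neg_distrib]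
      exact Finset.sum_congr rfl fun k _ => by ring
    have hsplit : p ^ 2 * (-ρ) ≤ ∑ k ∈ S, (β k - lt) * c k ^ 2 := by
      rw [hmain']
      have := Finset.sum_filter_add_sum_filter_not Finset.univ (fun k => lt < β k)
        (fun k => (β k - lt) * c k ^ 2)
      rw [← this, ← hSdef]
      have : ∑ k ∈ Finset.univ.filter (fun k => ¬ lt < β k), (β k - lt) * c k ^ 2 ≤ 0 := by
        apply Finset.sum_nonpos
        intro k hk
        rw [Finset.mem_filter] at hk
        have : β k - lt ≤ 0 := by push_neg at hk; linarith [hk.2]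
        exact mul_nonpos_of_nonpos_of_nonneg this (sq_nonneg _)
      linarith
    have hterm : ∀ k ∈ S, D * ((β k - lt) * c k ^ 2) ≤ p ^ 2 * d k ^ 2 := by
      intro k hk
      rw [hSdef, Finset.mem_filter] at hk
      have hβk : lamr + (γ - t) ≤ β k := by
        rcases le_or_gt (γ - t) (-(β k - lamr)) with h | h
        · exfalso
          have : lamr - (γ - t) < lt := by
            cases' abs_le.mp hνt with h1 h2; linarith
          linarith [hk.2]
        · have := hβgap k
          rcases abs_cases (β k - lamr) with ⟨he, _⟩ | ⟨he, _⟩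
          · linarith [this, he]
          · linarith [this, he]
      have hDle : D ≤ β k - lt := by rw [hDdef]; linarith
      have h1 : D * ((β k - lt) * c k ^ 2) ≤ (β k - lt) * ((β k - lt) * c k ^ 2) :=
        mul_le_mul_of_nonneg_right hDle
          (mul_nonneg (by linarith) (sq_nonneg _))
      have h3 : (β k - lt) * ((β k - lt) * c k ^ 2) = p ^ 2 * d k ^ 2 := by
        linear_combination ((β k - lt) * c k - p * d k) * hcoord k
      linarith
    have hsum2 : D * (p ^ 2 * (-ρ)) ≤ p ^ 2 * (t ^ 2 - e₀ ^ 2) := by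
      calc D * (p ^ 2 * (-ρ)) ≤ D * ∑ k ∈ S, (β k - lt) * c k ^ 2 :=
            mul_le_mul_of_nonneg_left hsplit hD.le
        _ = ∑ k ∈ S, D * ((β k - lt) * c k ^ 2) := by rw [Finset.mul_sum]
        _ ≤ ∑ k ∈ S, p ^ 2 * d k ^ 2 := Finset.sum_le_sum hterm
        _ ≤ ∑ k, p ^ 2 * d k ^ 2 := by
            apply Finset.sum_le_sum_of_subset_of_nonneg (Finset.filter_subset _ _)
            intro k _ _; positivity
        _ = p ^ 2 * ∑ k, d k ^ 2 := by rw [Finset.mul_sum]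
        _ = p ^ 2 * ‖bV‖ ^ 2 := by rw [aux_normsum yB bV]
        _ ≤ p ^ 2 * (t ^ 2 - e₀ ^ 2) := mul_le_mul_of_nonneg_left hbVnorm (sq_nonneg _)
    have h5 : p ^ 2 * (D * (-ρ)) ≤ p ^ 2 * (t ^ 2 - e₀ ^ 2) := by
      calc p ^ 2 * (D * (-ρ)) = D * (p ^ 2 * (-ρ)) := by ring
        _ ≤ p ^ 2 * (t ^ 2 - e₀ ^ 2) := hsum2
    have h6 := le_of_mul_le_mul_left h5 hp2
    linarith [h6]
  -- from the secular bound to the final quadratic bound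
  have habs_e₀ : -t ≤ e₀ ∧ e₀ ≤ t := abs_le.mp he₀abs
  have hρbound : |ρ| ≤ 2 * t ^ 2 / γ := by
    have hB0 : 0 ≤ 2 * t ^ 2 / γ := by positivity
    rw [abs_le]
    constructor
    · rcases le_or_gt 0 ρ with h | h
      · linarith
      · by_contra hcon
        push_neg at hcon
        have hk := key_neg h
        have hk' : (-ρ) * (γ - t - e₀ - ρ) ≤ t ^ 2 - e₀ ^ 2 := by
          have he : γ - t - (lt - lamr) = γ - t - e₀ - ρ := by rw [hρdef]; ring
          rwa [he] at hk
        have hγρ : 2 * t ^ 2 < γ * (-ρ) := by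
          have h1 : 2 * t ^ 2 / γ < -ρ := by linarith
          rw [div_lt_iff₀ hγ] at h1; linarith
        have hc0 : 0 ≤ γ - t - e₀ := by linarith [habs_e₀.1]
        have h3 := mul_le_mul_of_nonneg_left hk' (by positivity : (0:ℝ) ≤ γ ^ 2)
        nlinarith [sq_nonneg (γ * e₀ - t ^ 2), sq_nonneg (γ - t), sq_nonneg t,
          mul_le_mul_of_nonneg_right hγρ.le (mul_nonneg hγ.le hc0),
          mul_pos (lt_of_le_of_lt (by positivity : (0:ℝ) ≤ 2 * t ^ 2) hγρ)
            (lt_of_le_of_lt (by positivity : (0:ℝ) ≤ 2 * t ^ 2) hγρ)]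
    · rcases le_or_gt 0 ρ with h | h
      · by_contra hcon
        push_neg at hcon
        have hk := key_pos h
        have hk' : ρ * (γ - t + e₀ + ρ) ≤ t ^ 2 - e₀ ^ 2 := by
          have he : γ - t + (lt - lamr) = γ - t + e₀ + ρ := by rw [hρdef]; ring
          rwa [he] at hk
        have hγρ : 2 * t ^ 2 < γ * ρ := by
          rw [div_lt_iff₀ hγ] at hcon; linarith
        have hc0 : 0 ≤ γ - t + e₀ := by linarith [habs_e₀.1]
        have h3 := mul_le_mul_of_nonneg_left hk' (by positivity : (0:ℝ) ≤ γ ^ 2)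
        nlinarith [sq_nonneg (γ * e₀ + t ^ 2), sq_nonneg (γ - t), sq_nonneg t,
          mul_le_mul_of_nonneg_right hγρ.le (mul_nonneg hγ.le hc0),
          mul_pos (lt_of_le_of_lt (by positivity : (0:ℝ) ≤ 2 * t ^ 2) hγρ)
            (lt_of_le_of_lt (by positivity : (0:ℝ) ≤ 2 * t ^ 2) hγρ)]
      · linarith
  -- assemble the final statement
  refine ⟨j₀, ?_, ?_⟩
  · rw [hgoal_e₀]
    exact hρbound
  · intro j' hj'
    apply huniq j' j₀
    · have : γ / 2 < γ - t := by linarith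
      linarith [hj']
    · have : t < γ - t := by linarith
      linarith [hνt]
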